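/- Let (R, m, k) be a one-dimensional Cohen–Macaulay local ring with minimal multiplicity, let M and N be maximal Cohen–Macaulay R-modules, and set L := Ann_R(Ext¹_R(M, N)). Then L = m if and only if L is a reduction of m, i.e., L ⊆ m and m^{s+1} = L·m^s for some s ≥ 0 (equivalently, the integral closure of L equals m). -/

import Mathlib

open IsLocalRing

universe u

/-- The Ext module `Ext^n_R(M, N)`, via the derived functor `Ext` of Mathlib. -/
noncomputable abbrev extModule (R : Type u) [CommRing R] (M N : Type u)
    [AddCommGroup M] [Module R M] [AddCommGroup N] [Module R N] (n : ℕ) : ModuleCat.{u} R :=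
  ((Ext R (ModuleCat.{u} R) n).obj (Opposite.op (ModuleCat.of R M))).obj (ModuleCat.of R N)

/-- `M` is a torsion-free `R`-module: nonzerodivisors of `R` act injectively on `M`. -/
def TorsionFreeMod (R : Type*) (M : Type*) [CommRing R] [AddCommGroup M] [Module R M] : Prop :=
  ∀ r ∈ nonZeroDivisors R, ∀ x : M, r • x = 0 → x = 0

set_option linter.unusedSectionVars false

namespace Stmt10Aux

open CategoryTheory Limits

/-! ### Ideal-theoretic lemmas -/

section Ideals

variable {R : Type u} [CommRing R]

lemma span_singleton_mul_cancel {a : R} (ha : a ∈ nonZeroDivisors R) {I J : Ideal R}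
    (h : Ideal.span {a} * I = Ideal.span {a} * J) : I = J := by
  have key : ∀ {I J : Ideal R}, Ideal.span {a} * I ≤ Ideal.span {a} * J → I ≤ J := by
    intro I J hle x hx
    have hmem : a * x ∈ Ideal.span {a} * J :=
      hle (Ideal.mul_mem_mul (Ideal.mem_span_singleton_self a) hx)
    obtain ⟨z, hz, haz⟩ := Ideal.mem_span_singleton_mul.mp hmem
    rwa [(mul_cancel_left_mem_nonZeroDivisors ha).mp haz] at hz
  exact le_antisymm (key h.le) (key h.ge)

variable [IsLocalRing R]

lemma y_nzd {r y : R} (hr : r ∈ nonZeroDivisors R) (hrm : r ∈ maximalIdeal R)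
    (hy : (maximalIdeal R) ^ 2 = Ideal.span {y} * maximalIdeal R) :
    y ∈ nonZeroDivisors R := by
  rw [mem_nonZeroDivisors_iff_right]
  intro z hz
  have h1 : ∀ w ∈ Ideal.span {y} * maximalIdeal R, z * w = 0 := by
    intro w hw
    refine Submodule.mul_induction_on hw ?_ ?_
    · intro m hm n hn
      obtain ⟨c, hc⟩ := Ideal.mem_span_singleton'.mp hm
      calc z * (m * n) = c * n * (z * y) := by rw [← hc]; ring
        _ = 0 := by rw [hz, mul_zero]
    · intro u v hu hv
      rw [mul_add, hu, hv, add_zero]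
  have h2 : r * r ∈ Ideal.span {y} * maximalIdeal R := by
    rw [← hy, pow_two]
    exact Ideal.mul_mem_mul hrm hrm
  have h3 : z * r * r = 0 := by rw [mul_assoc]; exact h1 _ h2
  exact (mem_nonZeroDivisors_iff_right.mp hr) _ ((mem_nonZeroDivisors_iff_right.mp hr) _ h3)

lemma pow_succ_eq {y : R} (hy : (maximalIdeal R) ^ 2 = Ideal.span {y} * maximalIdeal R) :
    ∀ t : ℕ, (maximalIdeal R) ^ (t + 1) = Ideal.span {y ^ t} * maximalIdeal R
  | 0 => by simp
  | t + 1 => by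
    rw [pow_succ, pow_succ_eq hy t, mul_assoc, ← pow_two, hy, ← mul_assoc,
      Ideal.span_singleton_mul_span_singleton, ← pow_succ]

end Ideals

/-! ### Minimal free cover -/

theorem exists_minimal_cover (R : Type u) [CommRing R] [IsLocalRing R]
    (M : Type u) [AddCommGroup M] [Module R M] [Module.Finite R M] :
    ∃ (n : ℕ) (p : (Fin n → R) →ₗ[R] M), Function.Surjective p ∧
      ∀ v ∈ LinearMap.ker p, ∀ i, v i ∈ maximalIdeal R := by
  classical
  set k := ResidueField R
  let b := Module.finBasis k (TensorProduct R k M)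
  have hsurj : ∀ x : TensorProduct R k M, ∃ m : M, (TensorProduct.mk R k M) 1 m = x :=
    TensorProduct.mk_surjective R M k Ideal.Quotient.mk_surjective
  choose f hf using fun i => hsurj (b i)
  refine ⟨_, Fintype.linearCombination R f, ?_, ?_⟩
  · rw [← LinearMap.range_eq_top, Fintype.range_linearCombination]
    exact IsLocalRing.span_eq_top_of_tmul_eq_basis (R := R) f b hf
  · intro v hv i
    have h0 : ∑ j, v j • f j = 0 := by
      simpa [Fintype.linearCombination_apply] using hv
    have h1 : ∑ j, (algebraMap R k (v j)) • b j = 0 := by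
      calc ∑ j, (algebraMap R k (v j)) • b j = ∑ j, v j • b j := by
            simp [algebraMap_smul]
        _ = (TensorProduct.mk R k M 1) (∑ j, v j • f j) := by
            rw [map_sum]
            exact Finset.sum_congr rfl fun j _ => by rw [map_smul, hf]
        _ = 0 := by rw [h0, map_zero]
    have h2 := Fintype.linearIndependent_iff.mp b.linearIndependent _ h1 i
    exact Ideal.Quotient.eq_zero_iff_mem.mp h2

/-! ### The abstract annihilator lemma -/

lemma key_abstract {R : Type u} [CommRing R] [IsLocalRing R]
    {KK N' E' : Type u}
    [AddCommGroup KK] [Module R KK] [AddCommGroup N'] [Module R N']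
    [AddCommGroup E'] [Module R E']
    (y : R)
    (hycancel : ∀ a b : KK, y • a = y • b → a = b)
    (hkap : ∀ x ∈ maximalIdeal R, ∃ κ : KK →ₗ[R] KK, ∀ kk : KK, y • κ kk = x • kk)
    (δ : (KK →ₗ[R] N') →ₗ[R] E') (hδ : Function.Surjective δ)
    (hy2 : y ^ 2 ∈ Module.annihilator R E' * maximalIdeal R) :
    maximalIdeal R ≤ Module.annihilator R E' := by
  classical
  -- step 1: the operator `ψ` for `y ^ 2`
  have hP : ∃ ψ : KK →ₗ[R] KK, (∀ kk : KK, y • ψ kk = (y ^ 2) • kk) ∧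
      ∀ f : KK →ₗ[R] N', δ (f.comp ψ) = 0 := by
    refine Submodule.mul_induction_on hy2 ?_ ?_
    · intro l hl x hx
      obtain ⟨κ, hκ⟩ := hkap x hx
      refine ⟨l • κ, fun kk => ?_, fun f => ?_⟩
      · rw [LinearMap.smul_apply, smul_comm, hκ, smul_smul]
      · have : f.comp (l • κ) = l • f.comp κ := by
          ext kk; simp
        rw [this, map_smul, Module.mem_annihilator.mp hl]
    · rintro a b ⟨ψ₁, hψ₁, hδ₁⟩ ⟨ψ₂, hψ₂, hδ₂⟩
      refine ⟨ψ₁ + ψ₂, fun kk => ?_, fun f => ?_⟩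
      · rw [LinearMap.add_apply, smul_add, hψ₁, hψ₂, add_smul]
      · have : f.comp (ψ₁ + ψ₂) = f.comp ψ₁ + f.comp ψ₂ := by
          ext kk; simp
        rw [this, map_add, hδ₁, hδ₂, add_zero]
  obtain ⟨ψ, hψ, hψδ⟩ := hP
  -- step 2: `ψ = y • id`, hence `y` kills everything in `E'`
  have hψ_eq : ∀ kk : KK, ψ kk = y • kk := by
    intro kk
    apply hycancel
    rw [hψ, pow_two, mul_smul]
  have hykill : ∀ e : E', y • e = 0 := by
    intro e
    obtain ⟨f, rfl⟩ := hδ e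
    have : y • f = f.comp ψ := by
      ext kk
      simp [hψ_eq, map_smul]
    rw [← map_smul, this, hψδ]
  -- step 3: every `x ∈ m` kills everything
  intro x hx
  rw [Module.mem_annihilator]
  intro e
  obtain ⟨f, rfl⟩ := hδ e
  obtain ⟨κ, hκ⟩ := hkap x hx
  have : x • f = y • (f.comp κ) := by
    ext kk
    have : f (y • κ kk) = f (x • kk) := by rw [hκ]
    simpa [map_smul] using this.symm
  rw [← map_smul, this, map_smul, hykill]


noncomputable section

variable {C : Type u} [Category.{v} C] [Abelian C] [EnoughProjectives C]
variable {Z P0 : C} [Projective P0] (p : P0 ⟶ Z)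

def resComplex : ChainComplex C ℕ :=
  ChainComplex.mk' P0 (Projective.syzygies p) (Projective.d p)
    (fun f => ⟨_, Projective.d f, (Category.assoc _ _ _).trans ((congrArg (Projective.π (kernel f) ≫ ·) (kernel.condition f)).trans comp_zero)⟩)

lemma resComplex_d_1_0 : (resComplex p).d 1 0 = Projective.d p := by
  simp [resComplex]

lemma resComplex_exactAt_succ (n : ℕ) :
    (resComplex p).ExactAt (n + 1) := by
  rw [HomologicalComplex.exactAt_iff' _ (n + 1 + 1) (n + 1) n (by simp) (by simp)]
  refine ShortComplex.exact_of_iso ?_ (exact_d_f ((resComplex p).d (n + 1) n))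
  refine ShortComplex.isoMk (ChainComplex.mk'XIso P0 (Projective.syzygies p) (Projective.d p)
    (fun f => ⟨_, Projective.d f, (Category.assoc _ _ _).trans ((congrArg (Projective.π (kernel f) ≫ ·) (kernel.condition f)).trans comp_zero)⟩) n).symm (Iso.refl _) (Iso.refl _) ?_ ?_
  · have h := ChainComplex.mk'_d P0 (Projective.syzygies p) (Projective.d p)
      (fun f => ⟨_, Projective.d f, (Category.assoc _ _ _).trans ((congrArg (Projective.π (kernel f) ≫ ·) (kernel.condition f)).trans comp_zero)⟩) n
    exact (congrArg (fun x => _ ≫ x) h).trans ((Iso.inv_hom_id_assoc _ _).trans (Category.comp_id _).symm)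
  · exact (Category.id_comp _).trans (Category.comp_id _).symm

instance resComplex_projective (n : ℕ) : Projective ((resComplex p).X n) := by
  obtain (_ | _ | _ | n) := n
  · exact (inferInstance : Projective P0)
  · apply Projective.projective_over
  · apply Projective.projective_over
  · apply Projective.projective_over

variable [Epi p]

def resolutionOfCover : ProjectiveResolution Z where
  complex := resComplex p
  π := (ChainComplex.toSingle₀Equiv _ _).symm ⟨p, by
          rw [resComplex_d_1_0]
          dsimp [Projective.d]
          exact (Category.assoc _ _ _).trans ((congrArg (Projective.π (kernel p) ≫ ·) (kernel.condition p)).trans comp_zero)⟩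
  quasiIso := ⟨fun n => by
    cases n
    · rw [ChainComplex.quasiIsoAt₀_iff, ShortComplex.quasiIso_iff_of_zeros']
      · refine (ShortComplex.exact_and_epi_g_iff_of_iso ?_).2
          ⟨exact_d_f p, by dsimp; infer_instance⟩
        exact ShortComplex.isoMk (Iso.refl _) (Iso.refl _) (Iso.refl _)
          ((Category.id_comp _).trans ((resComplex_d_1_0 p).symm.trans (Category.comp_id _).symm)) (by simp [ChainComplex.toSingle₀Equiv]; erw [HomologicalComplex.mkHomToSingle_f]; exact (Category.id_comp _).trans ((Category.comp_id _).trans (Category.comp_id _)).symm)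
      all_goals rfl
    · rw [quasiIsoAt_iff_exactAt']
      · apply resComplex_exactAt_succ
      · apply ChainComplex.exactAt_succ_single_obj⟩

end

/-! ### The surjection `Hom(K, N) ↠ Ext¹(M, N)` -/

lemma exists_delta (R : Type u) [CommRing R] {Mt Nt : Type u}
    [AddCommGroup Mt] [Module R Mt] [AddCommGroup Nt] [Module R Nt]
    {n : ℕ} (p : (Fin n → R) →ₗ[R] Mt) (hp : Function.Surjective p) :
    ∃ δ : ((LinearMap.ker p) →ₗ[R] Nt) →ₗ[R] (extModule R Mt Nt 1),
      Function.Surjective δ := by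
  classical
  let P0 : ModuleCat.{u} R := ModuleCat.of R (Fin n → R)
  let Zc : ModuleCat.{u} R := ModuleCat.of R Mt
  let Nc : ModuleCat.{u} R := ModuleCat.of R Nt
  haveI : Projective P0 := ModuleCat.projective_of_free (Pi.basisFun R (Fin n))
  let pC : P0 ⟶ Zc := ModuleCat.ofHom p
  haveI : Epi pC := (ModuleCat.epi_iff_surjective pC).2 hp
  let res : ProjectiveResolution Zc := resolutionOfCover pC
  let Y : CochainComplex (ModuleCat.{u} R) ℕ := res.complex.linearYonedaObj R Nc
  let S : ShortComplex (ModuleCat.{u} R) := Y.sc' 0 1 2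
  -- the iso between Ext¹ and the concrete homology module
  let isoE : extModule R Mt Nt 1 ≅ S.moduleCatLeftHomologyData.H :=
    res.isoExt 1 Nc ≪≫
      Y.homologyIsoSc' 0 1 2 ((ComplexShape.up ℕ).prev_eq' rfl) ((ComplexShape.up ℕ).next_eq' rfl)
      ≪≫ S.moduleCatHomologyIso
  -- the linear maps of the resolution in low degrees
  let X1 : ModuleCat.{u} R := res.complex.X 1
  let X2 : ModuleCat.{u} R := res.complex.X 2
  let d10 : X1 ⟶ P0 := res.complex.d 1 0
  let d21 : X2 ⟶ X1 := res.complex.d 2 1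
  have hd : d21 ≫ d10 = 0 := res.complex.d_comp_d 2 1 0
  let K : Submodule R (Fin n → R) := LinearMap.ker p
  -- range of d10 is K
  let Kern : ModuleCat.{u} R := kernel pC
  let ki : Kern →ₗ[R] (Fin n → R) := (kernel.ι pC).hom
  let Pov : ModuleCat.{u} R := Projective.over (Kern : ModuleCat.{u} R)
  let kpi : Pov →ₗ[R] Kern := (Projective.π Kern).hom
  have hrange : LinearMap.range d10.hom = K := by
    have h2 : LinearMap.range ki = K := by
      have h3 : (ModuleCat.kernelIsoKer pC).hom ≫ ModuleCat.ofHom (LinearMap.ker pC.hom).subtype = kernel.ι pC :=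
        ModuleCat.kernelIsoKer_hom_ker_subtype pC
      have h4 : ki = (LinearMap.ker pC.hom).subtype.comp
          ((ModuleCat.kernelIsoKer pC).hom.hom : Kern →ₗ[R] LinearMap.ker pC.hom) := (congrArg ModuleCat.Hom.hom h3).symm
      have h5 : Function.Surjective ((ModuleCat.kernelIsoKer pC).hom.hom :
          Kern →ₗ[R] LinearMap.ker pC.hom) :=
        (ModuleCat.epi_iff_surjective _).1 inferInstance
      rw [h4, LinearMap.range_comp, LinearMap.range_eq_top.2 h5, Submodule.map_top,
        Submodule.range_subtype]
      rfl
    have h1 : d10.hom = ki.comp kpi := by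
      have := resComplex_d_1_0 pC
      exact congrArg ModuleCat.Hom.hom this
    have h6 : LinearMap.range (ki.comp kpi) = LinearMap.range ki := by
      rw [LinearMap.range_comp, LinearMap.range_eq_top.2
        ((ModuleCat.epi_iff_surjective (Projective.π Kern)).1 inferInstance),
        Submodule.map_top]
    exact (congrArg LinearMap.range h1).trans (h6.trans h2)
  -- the corestriction q' : X1 → K
  let q' : X1 →ₗ[R] K := LinearMap.codRestrict K d10.hom
    (fun a => hrange ▸ LinearMap.mem_range_self _ a)
  have hq'surj : Function.Surjective q' := by
    rintro ⟨k, hk⟩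
    obtain ⟨a, ha⟩ := (by rw [hrange]; exact hk : k ∈ LinearMap.range d10.hom)
    exact ⟨a, Subtype.ext ha⟩
  have hq'ker : LinearMap.ker q' = LinearMap.ker d10.hom :=
    LinearMap.ker_codRestrict _ _ _
  -- exactness at 1 : range d21 = ker d10
  have hexact : LinearMap.range d21.hom =
      LinearMap.ker d10.hom := by
    have := (HomologicalComplex.exactAt_iff' res.complex 2 1 0
      (by simp) (by simp)).mp (resComplex_exactAt_succ pC 0)
    exact this.moduleCat_range_eq_ker
  -- the map from Hom(K,N) to cycles
  let L : (K →ₗ[R] Nt) →ₗ[R] S.X₂ :=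
    (ModuleCat.homLinearEquiv (M := X1) (N := Nc) (S := R)).symm.toLinearMap ∘ₗ LinearMap.lcomp R Nt q'
  have hcyc : ∀ f : K →ₗ[R] Nt, L f ∈ LinearMap.ker S.g.hom := by
    intro f
    refine LinearMap.mem_ker.mpr ?_
    have : (q'.comp d21.hom) = 0 := by
      apply LinearMap.ext
      intro a
      apply Subtype.ext
      show d10.hom (d21.hom a) = 0
      have := congrArg (fun (φ : X2 ⟶ P0) => φ.hom a) hd
      simpa using this
    show d21 ≫ ModuleCat.ofHom (f.comp q') = 0
    ext a
    show (f.comp q').comp d21.hom a = 0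
    rw [LinearMap.comp_assoc, this, LinearMap.comp_zero]; rfl
  let toCyc : (K →ₗ[R] Nt) →ₗ[R] LinearMap.ker S.g.hom :=
    LinearMap.codRestrict _ L hcyc
  have htoCycSurj : Function.Surjective toCyc := by
    rintro ⟨g, hg⟩
    let glin : X1 →ₗ[R] Nt := g.hom
    have hgd : glin.comp d21.hom = 0 := congrArg ModuleCat.Hom.hom (show d21 ≫ g = 0 from hg)
    have hker : LinearMap.ker q' ≤ LinearMap.ker glin := by
      rw [hq'ker, ← hexact]
      rintro a ⟨b, rfl⟩
      have := congrArg (fun (φ : X2 →ₗ[R] Nt) => φ b) hgd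
      simpa using this
    let f : K →ₗ[R] Nt :=
      (Submodule.liftQ (LinearMap.ker q') glin hker).comp
        (q'.quotKerEquivOfSurjective hq'surj).symm.toLinearMap
    refine ⟨f, Subtype.ext ?_⟩
    show ModuleCat.ofHom (f.comp q') = g
    ext a : 2
    revert a
    intro a
    have h1 : (q'.quotKerEquivOfSurjective hq'surj).symm (q' a) =
        Submodule.Quotient.mk a := by
      rw [LinearEquiv.symm_apply_eq]
      rfl
    show f (q' a) = glin a
    simp only [f, LinearMap.comp_apply, LinearEquiv.coe_toLinearMap, h1]
    rfl
  -- assemble δ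
  let δ : ((LinearMap.ker p) →ₗ[R] Nt) →ₗ[R] (extModule R Mt Nt 1) :=
    (isoE.symm.toLinearEquiv.toLinearMap).comp
      (((LinearMap.range S.moduleCatToCycles).mkQ).comp toCyc)
  refine ⟨δ, ?_⟩
  have h1 : Function.Surjective ((LinearMap.range S.moduleCatToCycles).mkQ) :=
    Submodule.mkQ_surjective _
  simp only [δ, LinearMap.coe_comp, LinearEquiv.coe_toLinearMap]
  exact isoE.symm.toLinearEquiv.surjective.comp (h1.comp htoCycSurj)


lemma exists_kappa {R : Type u} [CommRing R] [IsLocalRing R]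
    {Mt : Type u} [AddCommGroup Mt] [Module R Mt]
    {n : ℕ} {p : (Fin n → R) →ₗ[R] Mt}
    (hker : ∀ v ∈ LinearMap.ker p, ∀ i, v i ∈ maximalIdeal R)
    (hM : TorsionFreeMod R Mt)
    {y : R} (hynzd : y ∈ nonZeroDivisors R)
    (hy : (maximalIdeal R) ^ 2 = Ideal.span {y} * maximalIdeal R)
    {x : R} (hx : x ∈ maximalIdeal R) :
    ∃ κ : (LinearMap.ker p) →ₗ[R] (LinearMap.ker p),
      ∀ k : LinearMap.ker p, y • (κ k : Fin n → R) = x • (k : Fin n → R) := by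
  classical
  have ycancel : ∀ v w : Fin n → R, y • v = y • w → v = w := by
    intro v w h
    funext i
    have h2 := congrFun h i
    simp only [Pi.smul_apply, smul_eq_mul] at h2
    exact (mul_cancel_left_mem_nonZeroDivisors hynzd).mp h2
  have hdiv : ∀ k : LinearMap.ker p, ∃ w : LinearMap.ker p,
      y • (w : Fin n → R) = x • (k : Fin n → R) := by
    intro k
    have hc : ∀ i, ∃ c, y * c = x * (k : Fin n → R) i := by
      intro i
      have h1 : x * (k : Fin n → R) i ∈ (maximalIdeal R) ^ 2 := by
        rw [pow_two]; exact Ideal.mul_mem_mul hx (hker _ k.2 i)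
      rw [hy] at h1
      obtain ⟨z, _, hyz⟩ := Ideal.mem_span_singleton_mul.mp h1
      exact ⟨z, hyz⟩
    choose c hcspec using hc
    have hw : y • c = x • (k : Fin n → R) := by
      funext i
      simp only [Pi.smul_apply, smul_eq_mul]
      exact hcspec i
    have hcmem : c ∈ LinearMap.ker p := by
      have h2 : y • p c = 0 := by
        rw [← map_smul, hw, map_smul, LinearMap.mem_ker.mp k.2, smul_zero]
      exact LinearMap.mem_ker.mpr (hM y hynzd _ h2)
    exact ⟨⟨c, hcmem⟩, hw⟩
  choose w hwspec using hdiv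
  refine ⟨⟨⟨w, ?_⟩, ?_⟩, hwspec⟩
  · intro a b
    apply Subtype.ext
    apply ycancel
    rw [hwspec]
    push_cast
    rw [smul_add, smul_add, hwspec, hwspec]
  · intro r a
    apply Subtype.ext
    apply ycancel
    rw [hwspec]
    push_cast
    simp only [id]
    rw [smul_comm y r, hwspec, smul_comm]


end Stmt10Aux

/-- Let `(R, m, k)` be a one-dimensional Cohen–Macaulay local ring with
minimal multiplicity, let `M, N` be maximal Cohen–Macaulay `R`-modules (over such a ring:
nonzero, finitely generated and torsion-free), and set `L := Ann_R(Ext¹_R(M, N))`.  Then `L = m`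
iff `L` is a reduction of `m`, i.e. `L ⊆ m` and `m^{s+1} = L·m^s` for some `s ≥ 0`. -/
theorem annihilator_ext_eq_maximalIdeal_iff_reduction {R : Type u} [CommRing R]
    [IsNoetherianRing R] [IsLocalRing R]
    (hdim : ringKrullDim R = 1)
    (hCM : ∃ r ∈ maximalIdeal R, r ∈ nonZeroDivisors R)
    (hminmult : ∃ y ∈ maximalIdeal R,
      (maximalIdeal R) ^ 2 = Ideal.span {y} * maximalIdeal R)
    (M N : Type u) [AddCommGroup M] [Module R M] [AddCommGroup N] [Module R N]
    [Module.Finite R M] [Module.Finite R N] [Nontrivial M] [Nontrivial N]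
    (hM : TorsionFreeMod R M) (hN : TorsionFreeMod R N) :
    Module.annihilator R (extModule R M N 1) = maximalIdeal R ↔
      (Module.annihilator R (extModule R M N 1) ≤ maximalIdeal R ∧
        ∃ s : ℕ, (maximalIdeal R) ^ (s + 1) =
          Module.annihilator R (extModule R M N 1) * (maximalIdeal R) ^ s) := by
  classical
  obtain ⟨y, hym, hy⟩ := hminmult
  obtain ⟨r, hrm, hrnzd⟩ := hCM
  have hynzd : y ∈ nonZeroDivisors R := Stmt10Aux.y_nzd hrnzd hrm hy
  set L := Module.annihilator R (extModule R M N 1) with hLdef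
  -- the key implication:  y² ∈ L·m  ⟹  m ≤ L
  have key : y ^ 2 ∈ L * maximalIdeal R → maximalIdeal R ≤ L := by
    intro hy2
    obtain ⟨n, p, hpsurj, hker⟩ := Stmt10Aux.exists_minimal_cover R M
    obtain ⟨δ, hδ⟩ := Stmt10Aux.exists_delta R (Nt := N) p hpsurj
    have ycancelK : ∀ a b : LinearMap.ker p, y • a = y • b → a = b := by
      intro a b h
      apply Subtype.ext
      funext i
      have h2 := congrFun (congrArg (fun (v : LinearMap.ker p) => (v : Fin n → R)) h) i
      simp only [Submodule.coe_smul, Pi.smul_apply, smul_eq_mul] at h2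
      exact (mul_cancel_left_mem_nonZeroDivisors hynzd).mp h2
    have hkap : ∀ x ∈ maximalIdeal R, ∃ κ : (LinearMap.ker p) →ₗ[R] (LinearMap.ker p),
        ∀ k : LinearMap.ker p, y • κ k = x • k := by
      intro x hx
      obtain ⟨κ, hκ⟩ := Stmt10Aux.exists_kappa hker hM hynzd hy hx
      refine ⟨κ, fun k => Subtype.ext ?_⟩
      simpa using hκ k
    exact Stmt10Aux.key_abstract y ycancelK hkap δ hδ hy2
  constructor
  · intro h
    refine ⟨h.le, 0, ?_⟩
    rw [pow_one, pow_zero, mul_one, h]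
  · rintro ⟨hle, s, hs⟩
    match s with
    | 0 =>
      rw [pow_one, pow_zero, mul_one] at hs
      exact hs.symm
    | Nat.succ t =>
      refine le_antisymm hle (key ?_)
      have h1 := Stmt10Aux.pow_succ_eq hy (t + 1)
      have h2 := Stmt10Aux.pow_succ_eq hy t
      rw [h1, h2] at hs
      have h3 : Ideal.span {y ^ t} * (Ideal.span {y} * maximalIdeal R) =
          Ideal.span {y ^ t} * (L * maximalIdeal R) := by
        calc Ideal.span {y ^ t} * (Ideal.span {y} * maximalIdeal R)
            = (Ideal.span {y ^ t} * Ideal.span {y}) * maximalIdeal R := by rw [mul_assoc]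
          _ = Ideal.span {y ^ (t + 1)} * maximalIdeal R := by
              rw [Ideal.span_singleton_mul_span_singleton, ← pow_succ]
          _ = L * (Ideal.span {y ^ t} * maximalIdeal R) := hs
          _ = Ideal.span {y ^ t} * (L * maximalIdeal R) := by ring
      have h4 : Ideal.span {y} * maximalIdeal R = L * maximalIdeal R :=
        Stmt10Aux.span_singleton_mul_cancel (pow_mem hynzd t) h3
      rw [← h4, pow_two]
      exact Ideal.mul_mem_mul (Ideal.mem_span_singleton_self y) hym
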